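/- Fix 1 < q < ∞, r ∈ ℕ with r ≥ 2, and t = r^(1/q). Let K_{q,r} be the smallest subset of finitely supported real sequences containing all ±e_n and closed under the operation: if z_1 < z_2 < … < z_l are in K_{q,r} with l ≤ r (consecutive supports), then t^(-1)(z_1 + … + z_l) ∈ K_{q,r}. If m = (m(1),…,m(n)) is a finite sequence of natural numbers with Φ(m) ≤ 1 (where Φ(m) = r^(-m(1)) + 2Σ_{i=2}^{n-1} r^(-m(i)) + r^(-m(n)), with the obvious modifications for n ≤ 2), then the vector V(m) = (t^(-m(1)), …, t^(-m(n)), 0, 0, …) belongs to K_{q,r}. -/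

import Mathlib

open scoped BigOperators

noncomputable def Phi (r : ℕ) : List ℕ → ℝ
  | [] => 0
  | [a] => (r : ℝ) ^ (-(a : ℤ))
  | a :: b :: l =>
      (r : ℝ) ^ (-(a : ℤ)) +
        2 * (((b :: l).dropLast).map (fun c => (r : ℝ) ^ (-(c : ℤ)))).sum +
        (r : ℝ) ^ (-(((b :: l).getLast (List.cons_ne_nil _ _)) : ℤ))


/-- `S` contains `±eₙ` and is closed under scaled sums of at most `r` successive blocks. -/
def TsirelsonClosed (q : ℝ) (r : ℕ) (S : Set (ℕ →₀ ℝ)) : Prop :=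
  (∀ n : ℕ, Finsupp.single n 1 ∈ S ∧ Finsupp.single n (-1) ∈ S) ∧
  ∀ (l : ℕ) (z : Fin l → ℕ →₀ ℝ), 1 ≤ l → l ≤ r → (∀ i, z i ∈ S) →
    (∀ i j : Fin l, i < j → ∀ a ∈ (z i).support, ∀ b ∈ (z j).support, a < b) →
    ((r : ℝ) ^ (-(1 / q) : ℝ)) • (∑ i, z i) ∈ S

/-- The norming set of the Tsirelson-type space `T[A_r, r^{-1/q}]`. -/
def Kqr (q : ℝ) (r : ℕ) : Set (ℕ →₀ ℝ) := ⋂₀ {S | TsirelsonClosed q r S}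

/-- `V(m) = (t^{-m(1)}, …, t^{-m(n)}, 0, …)` with `t = r^{1/q}`. -/
noncomputable def Vvec (q : ℝ) (r : ℕ) (m : List ℕ) : ℕ →₀ ℝ :=
  ∑ i ∈ Finset.range m.length,
    Finsupp.single i (((r : ℝ) ^ (1 / q : ℝ)) ^ (-(m.getD i 0 : ℤ)))

namespace VKaux

noncomputable def ph (r a : ℕ) : ℝ := (r : ℝ) ^ (-(a : ℤ))

noncomputable def sg (r : ℕ) (m : List ℕ) : ℝ := (m.map (ph r)).sum

variable {r : ℕ}

lemma ph_pos (hr : 2 ≤ r) (a : ℕ) : 0 < ph r a := by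
  have : (0:ℝ) < r := by exact_mod_cast Nat.lt_of_lt_of_le two_pos hr
  exact zpow_pos this _

lemma ph_le_one (hr : 2 ≤ r) (a : ℕ) : ph r a ≤ 1 := by
  apply zpow_le_one_of_nonpos₀
  · exact_mod_cast Nat.one_le_of_lt hr
  · omega

@[simp] lemma sg_nil : sg r [] = 0 := rfl

@[simp] lemma sg_cons (a : ℕ) (m : List ℕ) : sg r (a :: m) = ph r a + sg r m := rfl

lemma sg_append (B C : List ℕ) : sg r (B ++ C) = sg r B + sg r C := by
  simp [sg]

lemma sg_nonneg (hr : 2 ≤ r) (m : List ℕ) : 0 ≤ sg r m := by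
  induction m with
  | nil => simp
  | cons a m ih => simpa using add_nonneg (ph_pos hr a).le ih

lemma sg_pos (hr : 2 ≤ r) {m : List ℕ} (hm : m ≠ []) : 0 < sg r m := by
  cases m with
  | nil => exact absurd rfl hm
  | cons a m => simpa using add_pos_of_pos_of_nonneg (ph_pos hr a) (sg_nonneg hr m)

lemma mem_le_sg (hr : 2 ≤ r) {a : ℕ} {m : List ℕ} (h : a ∈ m) : ph r a ≤ sg r m := by
  induction m with
  | nil => simp at h
  | cons b m ih =>
    rcases List.mem_cons.1 h with h | h
    · subst h; simpa using sg_nonneg hr m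
    · simp only [sg_cons]
      linarith [ih h, (ph_pos hr b).le]

/-- last element with default 0 -/
lemma getLastD_irrel {α : Type*} (l : List α) (x y : α) (h : l ≠ []) :
    l.getLastD x = l.getLastD y := by
  rw [List.getLastD_eq_getLast?, List.getLastD_eq_getLast?, List.getLast?_eq_getLast h]; rfl

lemma getLastD_mem' {α : Type*} (d : α) {m : List α} (hm : m ≠ []) : m.getLastD d ∈ m := by
  cases m with
  | nil => exact absurd rfl hm
  | cons a m =>
    rw [List.getLastD_cons]
    simpa using (List.getLastD_mem_cons : m.getLastD a ∈ a :: m)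

lemma headD_mem {m : List ℕ} (hm : m ≠ []) : m.headD 0 ∈ m := by
  cases m with
  | nil => exact absurd rfl hm
  | cons a m => simp

lemma Phi_single (a : ℕ) : Phi r [a] = ph r a := rfl

lemma key (u : List ℕ) :
    (List.map (fun c : ℤ => (r:ℝ) ^ (-c)) (do let a ← u; pure ((a:ℤ)))).sum = sg r u := by
  induction u with
  | nil => rfl
  | cons x u ih => simpa [ph] using ih

lemma Phi_cons_cons (a b : ℕ) (l : List ℕ) :
    Phi r (a :: b :: l) = 2 * sg r (a :: b :: l) - ph r a - ph r ((a::b::l).getLastD 0) := by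
  have hlast : (b::l).getLast (List.cons_ne_nil _ _) = (a::b::l).getLastD 0 := by
    simp only [List.getLast_eq_getLastD, List.getLastD_cons]
  have hsg : sg r (b :: l) = sg r ((b::l).dropLast) + ph r ((a::b::l).getLastD 0) := by
    conv_lhs => rw [← List.dropLast_append_getLast (List.cons_ne_nil b l)]
    rw [sg_append, hlast]
    simp [sg]
  simp only [Phi]
  rw [key]
  show ph r a + 2 * sg r ((b::l).dropLast) + ph r ((b::l).getLast (List.cons_ne_nil _ _)) = _
  rw [hlast, sg_cons]
  linarith [hsg]

lemma Phi_le_two_sg_sub_head (hr : 2 ≤ r) {m : List ℕ} (hm : m ≠ []) :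
    Phi r m ≤ 2 * sg r m - ph r (m.headD 0) := by
  match m with
  | [a] => simp [Phi_single]; nlinarith [ph_pos hr a]
  | a :: b :: l =>
    rw [Phi_cons_cons]
    have := (ph_pos hr ((a::b::l).getLastD 0)).le
    simp only [List.headD_cons]
    linarith

lemma Phi_le_two_sg_sub_last (hr : 2 ≤ r) {m : List ℕ} (hm : m ≠ []) :
    Phi r m ≤ 2 * sg r m - ph r (m.getLastD 0) := by
  match m with
  | [a] => show ph r a ≤ 2 * sg r [a] - ph r a; simp; nlinarith [ph_pos hr a]
  | a :: b :: l =>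
    rw [Phi_cons_cons]
    have := (ph_pos hr a).le
    linarith

lemma headD_append {B C : List ℕ} (hB : B ≠ []) : (B ++ C).headD 0 = B.headD 0 := by
  cases B with
  | nil => exact absurd rfl hB
  | cons a B => rfl

lemma getLastD_append {B C : List ℕ} (hC : C ≠ []) : (B ++ C).getLastD 0 = C.getLastD 0 := by
  rw [List.getLastD_eq_getLast?, List.getLastD_eq_getLast?, List.getLast?_append_of_ne_nil _ hC]

lemma Phi_eq_of_two_le (hm : 2 ≤ m.length) :
    Phi r m = 2 * sg r m - ph r (m.headD 0) - ph r (m.getLastD 0) := by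
  match m with
  | a :: b :: l => rw [Phi_cons_cons]; rfl

lemma Phi_append (hr : 2 ≤ r) {B C : List ℕ} (hB : B ≠ []) (hC : C ≠ []) :
    Phi r B + Phi r C ≤ Phi r (B ++ C) := by
  have h2 : 2 ≤ (B ++ C).length := by
    rw [List.length_append]
    rcases B with _ | ⟨a, B⟩; · exact absurd rfl hB
    rcases C with _ | ⟨c, C⟩; · exact absurd rfl hC
    simp; omega
  rw [Phi_eq_of_two_le h2, sg_append, headD_append hB, getLastD_append hC]
  have h1 := Phi_le_two_sg_sub_head hr hB
  have h2' := Phi_le_two_sg_sub_last hr hC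
  linarith

lemma Phi_extend (hr : 2 ≤ r) {B : List ℕ} (hB : B ≠ []) (c : ℕ) :
    Phi r (B ++ [c]) = 2 * sg r B + ph r c - ph r (B.headD 0) := by
  have h2 : 2 ≤ (B ++ [c]).length := by
    rcases B with _ | ⟨a, B⟩; · exact absurd rfl hB
    simp
  rw [Phi_eq_of_two_le h2, sg_append, headD_append hB,
    getLastD_append (by simp : ([c] : List ℕ) ≠ [])]
  have h3 : sg r [c] = ph r c := by simp [sg]
  rw [h3]
  have h4 : (([c] : List ℕ).getLastD 0) = c := rfl
  rw [h4]
  ring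

lemma sg_le_Phi (hr : 2 ≤ r) {m : List ℕ} (hm : 2 ≤ m.length) : sg r m ≤ Phi r m := by
  match m with
  | a :: b :: l =>
    rw [Phi_cons_cons]
    have hhead : ph r ((a::b::l).headD 0) ≤ ph r a + sg r (b::l) := by
      simp only [List.headD_cons]
      linarith [sg_nonneg hr (b::l)]
    have hlast : ph r ((a::b::l).getLastD 0) ≤ sg r (b::l) := by
      have hmem : (a::b::l).getLastD 0 ∈ b :: l := by
        have : (a::b::l).getLastD 0 = (b::l).getLastD 0 := by simp [List.getLastD_cons]
        rw [this]; exact getLastD_mem' 0 (List.cons_ne_nil _ _)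
      exact mem_le_sg hr hmem
    simp only [sg_cons, List.headD_cons] at *
    linarith

lemma Phi_pos (hr : 2 ≤ r) {m : List ℕ} (hm : m ≠ []) : 0 < Phi r m := by
  match m with
  | [a] => exact ph_pos hr a
  | a :: b :: l =>
    calc (0:ℝ) < sg r (a::b::l) := sg_pos hr (by simp)
    _ ≤ _ := sg_le_Phi hr (by simp)

lemma entries_pos (hr : 2 ≤ r) {m : List ℕ} (hm : 2 ≤ m.length) (hΦ : Phi r m ≤ 1) :
    ∀ a ∈ m, 1 ≤ a := by
  intro a ha
  by_contra h
  have ha0 : a = 0 := by omega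
  subst ha0
  obtain ⟨u, v, rfl⟩ := List.append_of_mem ha
  have huv : u ≠ [] ∨ v ≠ [] := by
    rcases u with _ | _ <;> rcases v with _ | _ <;> simp_all
  have hsg : 1 < sg r (u ++ 0 :: v) := by
    rw [sg_append, sg_cons]
    have h0 : ph r 0 = 1 := by simp [ph]
    rcases huv with h' | h'
    · nlinarith [sg_pos hr h', sg_nonneg hr v]
    · nlinarith [sg_pos hr h', sg_nonneg hr u]
  linarith [sg_le_Phi hr hm]

lemma ph_pred (hr : 2 ≤ r) {a : ℕ} (ha : 1 ≤ a) : ph r (a - 1) = r * ph r a := by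
  have hr0 : (r:ℝ) ≠ 0 := by positivity
  have : (-(↑(a-1):ℤ)) = -(a:ℤ) + 1 := by omega
  rw [ph, this, zpow_add₀ hr0, zpow_one, ph]; ring

lemma sg_pred (hr : 2 ≤ r) {m : List ℕ} (hpos : ∀ a ∈ m, 1 ≤ a) :
    sg r (m.map (· - 1)) = r * sg r m := by
  induction m with
  | nil => simp
  | cons a m ih =>
    simp only [List.map_cons, sg_cons]
    rw [ih (fun x hx => hpos x (List.mem_cons_of_mem a hx)),
      ph_pred hr (hpos a (List.mem_cons_self))]
    ring

lemma Phi_pred (hr : 2 ≤ r) {m : List ℕ} (hm : 2 ≤ m.length) (hpos : ∀ a ∈ m, 1 ≤ a) :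
    Phi r (m.map (· - 1)) = r * Phi r m := by
  have hm' : m ≠ [] := by rintro rfl; simp at hm
  have hlen : 2 ≤ (m.map (· - 1)).length := by simpa using hm
  rw [Phi_eq_of_two_le hlen, Phi_eq_of_two_le hm, sg_pred hr hpos]
  have hhead : (m.map (· - 1)).headD 0 = m.headD 0 - 1 := by
    cases m with | nil => simp | cons a m => rfl
  have hlast : (m.map (· - 1)).getLastD 0 = m.getLastD 0 - 1 := by
    have : (m.map (· - 1)).getLastD ((· - 1) 0) = (· - 1) (m.getLastD 0) := List.getLastD_map
    simpa using this
  rw [hhead, hlast, ph_pred hr (hpos _ (headD_mem hm')),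
    ph_pred hr (hpos _ (getLastD_mem' 0 hm'))]
  ring

/-- greedy maximal prefix -/
lemma exists_greedy (hr : 2 ≤ r) :
    ∀ (n : ℕ) (m : List ℕ), m.length ≤ n → 1 < Phi r m →
      ∃ B c rest, m = B ++ c :: rest ∧ B ≠ [] ∧ Phi r B ≤ 1 ∧ 1 < Phi r (B ++ [c]) := by
  intro n
  induction n with
  | zero =>
    intro m hlen hΦ
    have : m = [] := List.eq_nil_of_length_eq_zero (by omega)
    subst this
    have : Phi r ([] : List ℕ) = 0 := rfl
    rw [this] at hΦ; linarith
  | succ n ih =>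
    intro m hlen hΦ
    have hm : m ≠ [] := by
      rintro rfl
      have : Phi r ([] : List ℕ) = 0 := rfl
      rw [this] at hΦ; linarith
    -- m has length ≥ 2 since Phi of a singleton is ≤ 1
    have hsingle : ∀ a : ℕ, m ≠ [a] := by
      rintro a rfl
      rw [Phi_single] at hΦ
      linarith [ph_le_one hr a]
    -- write m = m₀ ++ [d]
    obtain ⟨m₀, d, rfl⟩ : ∃ m₀ d, m = m₀ ++ [d] := by
      rcases List.eq_nil_or_concat m with rfl | ⟨m₀, d, h⟩
      · exact absurd rfl hm
      · exact ⟨m₀, d, by rw [h, List.concat_eq_append]⟩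
    have hm₀ : m₀ ≠ [] := by
      rintro rfl
      exact hsingle d (by simp)
    by_cases hΦ₀ : Phi r m₀ ≤ 1
    · exact ⟨m₀, d, [], rfl, hm₀, hΦ₀, hΦ⟩
    · push_neg at hΦ₀
      have hlen₀ : m₀.length ≤ n := by
        have := hlen
        simp [List.length_append] at this ⊢
        omega
      obtain ⟨B, c, rest, heq, hB, h1, h2⟩ := ih m₀ hlen₀ hΦ₀
      exact ⟨B, c, rest ++ [d], by rw [heq]; simp, hB, h1, h2⟩

lemma flatten_ne_nil {L : List (List ℕ)} (hL : L ≠ []) (hblocks : ∀ B ∈ L, B ≠ []) :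
    L.flatten ≠ [] := by
  cases L with
  | nil => exact absurd rfl hL
  | cons C L' =>
    have hC := hblocks C (List.mem_cons_self)
    simp only [List.flatten_cons]
    intro h
    rcases List.append_eq_nil_iff.1 h with ⟨h1, _⟩
    exact hC h1

lemma getLastD_flatten : ∀ (L : List (List ℕ)), (∀ B ∈ L, B ≠ []) → L ≠ [] →
    L.flatten.getLastD 0 = (L.getLastD []).getLastD 0 := by
  intro L
  induction L with
  | nil => intro _ h; exact absurd rfl h
  | cons B L' ih =>
    intro hblocks _
    rcases eq_or_ne L' [] with rfl | hL'
    · simp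
    · have hflatL' : L'.flatten ≠ [] :=
        flatten_ne_nil hL' (fun B' hB' => hblocks B' (List.mem_cons_of_mem B hB'))
      rw [List.flatten_cons, getLastD_append hflatL',
        ih (fun B' hB' => hblocks B' (List.mem_cons_of_mem B hB')) hL',
        List.getLastD_cons, getLastD_irrel L' B [] hL']

/-- potential of a decomposition -/
noncomputable def Q (r : ℕ) (L : List (List ℕ)) (m : List ℕ) : ℝ :=
  2 * sg r m - ph r (m.headD 0) - 2 * sg r (L.getLastD []) + ph r ((L.getLastD []).headD 0)

lemma exists_split_aux (hr : 2 ≤ r) :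
    ∀ (n : ℕ) (m : List ℕ), m.length ≤ n → m ≠ [] →
      ∃ L : List (List ℕ), L.flatten = m ∧ (∀ B ∈ L, B ≠ [] ∧ Phi r B ≤ 1) ∧
        1 ≤ L.length ∧ ((L.length : ℝ) - 1 ≤ Q r L m) ∧
        (2 ≤ L.length → (L.length : ℝ) - 1 < Q r L m) := by
  intro n
  induction n with
  | zero =>
    intro m hlen hm
    rcases m with _ | _
    · exact absurd rfl hm
    · simp at hlen
  | succ n ih =>
    intro m hlen hm
    by_cases hΦ : Phi r m ≤ 1
    · refine ⟨[m], by simp, ?_, by simp, ?_, by simp⟩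
      · intro B hB; rw [List.mem_singleton] at hB; subst hB; exact ⟨hm, hΦ⟩
      · simp [Q]
    · push_neg at hΦ
      obtain ⟨B, c, rest, rfl, hB, hΦB, hΦBc⟩ :=
        exists_greedy hr (n+1) m hlen hΦ
      have hlenrest : (c :: rest).length ≤ n := by
        rcases B with _ | ⟨b, B⟩; · exact absurd rfl hB
        simp [List.length_append] at hlen ⊢
        omega
      obtain ⟨L', hflat, hblocks, hlen', hle, hlt⟩ := ih (c :: rest) hlenrest (by simp)
      have hL' : L' ≠ [] := by
        rintro rfl; simp at hlen'
      refine ⟨B :: L', by simp [hflat], ?_, by simp, ?_, fun _ => ?_⟩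
      · intro B' hB'
        rcases List.mem_cons.1 hB' with rfl | h
        · exact ⟨hB, hΦB⟩
        · exact hblocks B' h
      all_goals {
        have hlastD : (B :: L').getLastD [] = L'.getLastD [] := by
          cases L' with
          | nil => exact absurd rfl hL'
          | cons X L'' => simp [List.getLastD_cons]
        have hQdiff : Q r (B :: L') (B ++ c :: rest) = Q r L' (c :: rest) + Phi r (B ++ [c]) := by
          rw [Q, Q, hlastD, Phi_extend hr hB, sg_append, headD_append hB]
          simp only [sg_cons, List.headD_cons]
          ring
        have hlen1 : ((B :: L').length : ℝ) = (L'.length : ℝ) + 1 := by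
          simp
        rw [hQdiff, hlen1]
        linarith
      }

lemma exists_split (hr : 2 ≤ r) {m : List ℕ} (hm2 : 2 ≤ m.length)
    (hΦ : Phi r m ≤ (r : ℝ)) :
    ∃ L : List (List ℕ), L.flatten = m ∧ (∀ B ∈ L, B ≠ [] ∧ Phi r B ≤ 1) ∧
      1 ≤ L.length ∧ L.length ≤ r := by
  have hm : m ≠ [] := by rintro rfl; simp at hm2
  obtain ⟨L, hflat, hblocks, h1, hle, hlt⟩ := exists_split_aux hr m.length m le_rfl hm
  refine ⟨L, hflat, hblocks, h1, ?_⟩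
  -- bound Q by Phi
  have hL : L ≠ [] := by rintro rfl; simp at h1
  have hlastblock := hblocks (L.getLastD []) (getLastD_mem' [] hL)
  have hlastm : m.getLastD 0 = (L.getLastD []).getLastD 0 := by
    rw [← hflat]
    exact getLastD_flatten L (fun B hB => (hblocks B hB).1) hL
  have hBl := hlastblock.1
  have hsum2 : ph r ((L.getLastD []).headD 0) + ph r ((L.getLastD []).getLastD 0)
      ≤ 2 * sg r (L.getLastD []) := by
    have h1 := mem_le_sg hr (headD_mem hBl)
    have h2 := mem_le_sg hr (getLastD_mem' 0 hBl)
    linarith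
  have hQle : Q r L m ≤ Phi r m := by
    rw [Q, Phi_eq_of_two_le hm2, hlastm]
    linarith
  by_cases h2L : 2 ≤ L.length
  · have := hlt h2L
    have hcast : (L.length : ℝ) < ((r + 1 : ℕ) : ℝ) := by push_cast; linarith
    have := Nat.cast_lt.1 hcast
    omega
  · omega

lemma mem_le_listsum : ∀ {a : ℕ} {L : List ℕ}, a ∈ L → a ≤ L.sum := by
  intro a L h
  induction L with
  | nil => simp at h
  | cons b L ih =>
    rcases List.mem_cons.1 h with rfl | h'
    · simp
    · have := ih h'; simp only [List.sum_cons]; omega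

lemma sum_map_pred : ∀ {m : List ℕ}, (∀ a ∈ m, 1 ≤ a) → (m.map (· - 1)).sum + m.length = m.sum := by
  intro m
  induction m with
  | nil => simp
  | cons a m ih =>
    intro h
    have ha := h a (List.mem_cons_self)
    have := ih (fun x hx => h x (List.mem_cons_of_mem a hx))
    simp only [List.map_cons, List.sum_cons, List.length_cons]
    omega

lemma Kqr_closed (q : ℝ) (r : ℕ) : TsirelsonClosed q r (Kqr q r) := by
  constructor
  · intro n
    exact ⟨Set.mem_sInter.2 fun S hS => (hS.1 n).1, Set.mem_sInter.2 fun S hS => (hS.1 n).2⟩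
  · intro l z h1 hlr hz hsupp
    exact Set.mem_sInter.2 fun S hS =>
      hS.2 l z h1 hlr (fun i => Set.mem_sInter.1 (hz i) S hS) hsupp

noncomputable def tt (q : ℝ) (r : ℕ) : ℝ := (r : ℝ) ^ (1/q : ℝ)

lemma tt_pos (q : ℝ) {r : ℕ} (hr : 2 ≤ r) : 0 < tt q r := by
  have : (0:ℝ) < r := by exact_mod_cast Nat.lt_of_lt_of_le two_pos hr
  exact Real.rpow_pos_of_pos this _

lemma scalar_mul (q : ℝ) {r : ℕ} (hr : 2 ≤ r) (d : ℕ) (hd : 1 ≤ d) :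
    (r : ℝ) ^ (-(1 / q) : ℝ) * tt q r ^ (-(↑(d-1) : ℤ)) = tt q r ^ (-(d : ℤ)) := by
  have ht := tt_pos q hr
  have hr0 : (0:ℝ) ≤ (r:ℝ) := by positivity
  have h1 : ((r : ℝ) ^ (-(1 / q) : ℝ)) = (tt q r)⁻¹ := by
    rw [tt, ← Real.rpow_neg hr0]
  rw [h1, ← zpow_neg_one, ← zpow_add₀ ht.ne']
  congr 1
  omega

lemma single_mem (q : ℝ) {r : ℕ} (hr : 2 ≤ r) (k a : ℕ) :
    Finsupp.single k (tt q r ^ (-(a : ℤ))) ∈ Kqr q r := by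
  induction a with
  | zero => simpa using ((Kqr_closed q r).1 k).1
  | succ a ih =>
    have h := (Kqr_closed q r).2 1 (fun _ => Finsupp.single k (tt q r ^ (-(a : ℤ))))
      le_rfl (by omega) (fun _ => ih)
      (fun i j hij => (hij.ne (Subsingleton.elim i j)).elim)
    rw [Fin.sum_univ_one, Finsupp.smul_single, smul_eq_mul,
      show (-(a:ℤ)) = -(↑(a+1-1:ℕ):ℤ) by simp,
      scalar_mul q hr (a+1) (by omega)] at h
    exact h

noncomputable def W (q : ℝ) (r k : ℕ) (m : List ℕ) : ℕ →₀ ℝ :=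
  ∑ i ∈ Finset.range m.length, Finsupp.single (k + i) (tt q r ^ (-(m.getD i 0 : ℤ)))

lemma W_single (q : ℝ) (r k a : ℕ) : W q r k [a] = Finsupp.single k (tt q r ^ (-(a : ℤ))) := by
  simp [W]

lemma W_append (q : ℝ) (r k : ℕ) (B C : List ℕ) :
    W q r k (B ++ C) = W q r k B + W q r (k + B.length) C := by
  unfold W
  rw [List.length_append, Finset.sum_range_add]
  congr 1
  · exact Finset.sum_congr rfl fun i hi => by
      rw [List.getD_append _ _ _ _ (Finset.mem_range.1 hi)]
  · exact Finset.sum_congr rfl fun i _ => by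
      rw [List.getD_append_right _ _ _ _ (Nat.le_add_right _ _), Nat.add_sub_cancel_left,
        Nat.add_assoc]

noncomputable def off (L : List (List ℕ)) (j : ℕ) : ℕ :=
  ∑ x ∈ Finset.range j, (L.getD x []).length

lemma off_succ (L : List (List ℕ)) (j : ℕ) :
    off L (j+1) = off L j + (L.getD j []).length := Finset.sum_range_succ _ j

lemma off_mono (L : List (List ℕ)) {i j : ℕ} (h : i ≤ j) : off L i ≤ off L j :=
  Finset.sum_le_sum_of_subset (Finset.range_subset_range.2 h)

lemma off_cons_succ (B : List ℕ) (L' : List (List ℕ)) (j : ℕ) :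
    off (B :: L') (j+1) = B.length + off L' j := by
  unfold off
  rw [Finset.sum_range_succ']
  simp [Nat.add_comm]

lemma W_flatten (q : ℝ) (r : ℕ) :
    ∀ (L : List (List ℕ)) (k : ℕ),
      W q r k L.flatten = ∑ j ∈ Finset.range L.length, W q r (k + off L j) (L.getD j []) := by
  intro L
  induction L with
  | nil => intro k; simp [W]
  | cons B L' ih =>
    intro k
    rw [List.flatten_cons, W_append, ih (k + B.length), List.length_cons,
      Finset.sum_range_succ', add_comm (W q r k B)]
    congr 1
    refine Finset.sum_congr rfl fun j _ => ?_
    rw [List.getD_cons_succ, off_cons_succ, Nat.add_assoc]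

lemma W_support (q : ℝ) (r k : ℕ) (m : List ℕ) :
    ∀ x ∈ (W q r k m).support, k ≤ x ∧ x < k + m.length := by
  intro x hx
  obtain ⟨i, hi, hxi⟩ := Finset.mem_biUnion.1 (Finsupp.support_finset_sum hx)
  have hx' : x ∈ ({k + i} : Finset ℕ) := Finsupp.support_single_subset hxi
  rw [Finset.mem_singleton] at hx'
  rw [Finset.mem_range] at hi
  omega

lemma W_mem (q : ℝ) {r : ℕ} (hr : 2 ≤ r) :
    ∀ (N : ℕ) (m : List ℕ) (k : ℕ), m.sum ≤ N → m ≠ [] → Phi r m ≤ 1 →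
      W q r k m ∈ Kqr q r := by
  intro N
  induction N with
  | zero =>
    intro m k hsum hm hΦ
    match m with
    | [a] => rw [W_single]; exact single_mem q hr k a
    | a :: b :: l =>
      have ha := entries_pos hr (by simp) hΦ a (by simp)
      simp only [List.sum_cons] at hsum
      omega
  | succ N ih =>
    intro m k hsum hm hΦ
    match m with
    | [a] => rw [W_single]; exact single_mem q hr k a
    | a :: b :: l =>
      set m₀ : List ℕ := a :: b :: l with hm₀
      have hm2 : 2 ≤ m₀.length := by simp [hm₀]
      have hpos := entries_pos hr hm2 hΦ
      have hrR : (0:ℝ) < r := by exact_mod_cast Nat.lt_of_lt_of_le two_pos hr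
      have hΦ' : Phi r (m₀.map (· - 1)) ≤ (r : ℝ) := by
        rw [Phi_pred hr hm2 hpos]
        nlinarith [Phi_pos hr (show m₀ ≠ [] by simp [hm₀])]
      have hm'2 : 2 ≤ (m₀.map (· - 1)).length := by simpa using hm2
      obtain ⟨L, hflat, hblocks, hL1, hLr⟩ := exists_split hr hm'2 hΦ'
      have hsum' : (m₀.map (· - 1)).sum + m₀.length = m₀.sum := sum_map_pred hpos
      have happ := (Kqr_closed q r).2 L.length
        (fun i : Fin L.length => W q r (k + off L i) (L.getD i [])) hL1 hLr
        (fun i => by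
          have hBmem : L.getD i [] ∈ L := by
            rw [List.getD_eq_getElem L [] i.isLt]
            exact List.getElem_mem i.isLt
          obtain ⟨hBne, hBΦ⟩ := hblocks _ hBmem
          have hBsum : (L.getD (i:ℕ) []).sum ≤ N := by
            have h1 : (L.getD (i:ℕ) []).sum ≤ (m₀.map (· - 1)).sum := by
              have h2 : (L.getD (i:ℕ) []).sum ∈ L.map List.sum :=
                List.mem_map_of_mem hBmem
              have h3 : (L.map List.sum).sum = (m₀.map (· - 1)).sum := by
                rw [← hflat, List.sum_flatten]
              rw [← h3]
              exact mem_le_listsum h2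
            have hlen : 2 ≤ m₀.length := hm2
            omega
          exact ih _ _ hBsum hBne hBΦ)
        (fun i j hij x hx y hy => by
          obtain ⟨hx1, hx2⟩ := W_support q r _ _ x hx
          obtain ⟨hy1, hy2⟩ := W_support q r _ _ y hy
          have h1 : off L ((i:ℕ)+1) ≤ off L (j:ℕ) := off_mono L (Nat.succ_le_of_lt hij)
          rw [off_succ] at h1
          omega)
      rw [Fin.sum_univ_eq_sum_range (fun j => W q r (k + off L j) (L.getD j [])) L.length,
        ← W_flatten, hflat] at happ
      have heq : W q r k m₀ = ((r : ℝ) ^ (-(1 / q) : ℝ)) • W q r k (m₀.map (· - 1)) := by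
        unfold W
        rw [Finset.smul_sum, List.length_map]
        refine Finset.sum_congr rfl fun i hi => ?_
        rw [Finsupp.smul_single, smul_eq_mul]
        have hgetD : (m₀.map (· - 1)).getD i 0 = m₀.getD i 0 - 1 := by
          have := List.getD_map (l := m₀) 0 (f := (· - 1)) (n := i)
          simpa using this
        have hge : 1 ≤ m₀.getD i 0 := by
          apply hpos
          rw [List.getD_eq_getElem m₀ 0 (by rwa [← Finset.mem_range])]
          exact List.getElem_mem _
        rw [hgetD, scalar_mul q hr _ hge]
      rw [heq]
      exact happ

end VKaux

theorem Vvec_mem_Kqr (q : ℝ) (hq : 1 < q) (r : ℕ) (hr : 2 ≤ r)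
    (m : List ℕ) (hm : m ≠ []) (hΦ : Phi r m ≤ 1) :
    Vvec q r m ∈ Kqr q r := by
  have hV : Vvec q r m = VKaux.W q r 0 m := by
    unfold Vvec VKaux.W VKaux.tt
    exact Finset.sum_congr rfl fun i _ => by rw [Nat.zero_add]
  rw [hV]
  exact VKaux.W_mem q hr m.sum m 0 le_rfl hm hΦ
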